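/- Let A be a nontrivial commutative ring in which the image of a positive integer N is a unit, let F ∈ A[y] be monic of degree d = N·m. For a monic φ ∈ A[y] of degree m, define the Tschirnhausen transform τ_F(φ) := φ + N^{−1}·((F /ₘ φ^{N−1}) %ₘ φ), where /ₘ and %ₘ denote quotient and remainder of division by a monic polynomial (so that (F /ₘ φ^{N−1}) %ₘ φ is the coefficient a_{N−1} of the φ-adic expansion of F). Then for every monic φ ∈ A[y] of degree m there exists j ≤ m such that the j-th iterate τ_F^[j](φ) is the N-th approximate root of F, i.e., τ_F^[j](φ) is monic of degree m and deg(F − (τ_F^[j](φ))^N) < d − m. -/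

import Mathlib

open Polynomial

open Finset in
lemma withBot_lt_succ_iff {x : WithBot ℕ} {s : ℕ} :
    x < ((s + 1 : ℕ) : WithBot ℕ) ↔ x ≤ (s : WithBot ℕ) := by
  cases x with
  | bot => simpa using WithBot.bot_lt_coe (s+1)
  | coe v =>
      rw [show (WithBot.some v : WithBot ℕ) = ((v : ℕ) : WithBot ℕ) from rfl,
        Nat.cast_lt, Nat.cast_le]
      exact Nat.lt_succ_iff

lemma tsch_step {A : Type*} [CommRing A] [Nontrivial A]
    (n m t : ℕ) (hunit : IsUnit ((n + 1 : ℕ) : A))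
    (F φ : A[X]) (hφ : φ.Monic) (hφd : φ.natDegree = m)
    (ht : 1 ≤ t) (htm : t ≤ m)
    (hdeg : (F - φ ^ (n + 1)).degree < ((n * m + t : ℕ) : WithBot ℕ)) :
    (φ + C (Ring.inverse ((n + 1 : ℕ) : A)) * ((F /ₘ φ ^ n) %ₘ φ)).Monic ∧
    (φ + C (Ring.inverse ((n + 1 : ℕ) : A)) * ((F /ₘ φ ^ n) %ₘ φ)).natDegree = m ∧
    (F - (φ + C (Ring.inverse ((n + 1 : ℕ) : A)) * ((F /ₘ φ ^ n) %ₘ φ)) ^ (n + 1)).degree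
      < ((n * m + (t - 1) : ℕ) : WithBot ℕ) := by
  obtain ⟨s, rfl⟩ : ∃ s, t = s + 1 := ⟨t - 1, by omega⟩
  have hm1 : 1 ≤ m := le_trans ht htm
  set Q : A[X] := (F - φ ^ (n + 1)) /ₘ φ ^ n with hQdef
  set R : A[X] := (F - φ ^ (n + 1)) %ₘ φ ^ n with hRdef
  have hφ0 : φ.degree = (m : WithBot ℕ) := by
    rw [degree_eq_natDegree hφ.ne_zero, hφd]
  have hφn : (φ ^ n).Monic := hφ.pow n
  have hφnd : (φ ^ n).degree = ((n * m : ℕ) : WithBot ℕ) := by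
    rw [degree_eq_natDegree hφn.ne_zero, hφ.natDegree_pow, hφd]
  -- degree of Q is < t
  have hQt : Q.degree < ((s + 1 : ℕ) : WithBot ℕ) := by
    rcases eq_or_ne Q 0 with h | h
    · rw [h, degree_zero]; exact WithBot.bot_lt_coe _
    · have hG : F - φ ^ (n + 1) ≠ 0 := by
        intro h0; apply h; rw [hQdef, h0, zero_divByMonic]
      rw [degree_eq_natDegree h, Nat.cast_lt]
      have h1 : (F - φ ^ (n + 1)).natDegree < n * m + (s + 1) := by
        have := hdeg
        rw [degree_eq_natDegree hG, Nat.cast_lt] at this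
        exact this
      have h2 : Q.natDegree = (F - φ ^ (n + 1)).natDegree - (φ ^ n).natDegree :=
        natDegree_divByMonic _ hφn
      rw [h2, hφ.natDegree_pow, hφd]
      omega
  have hQm : Q.degree < φ.degree := by
    rw [hφ0]
    exact lt_of_lt_of_le hQt (by exact_mod_cast htm)
  -- the φ-adic coefficient equals Q
  have hRlt' : R.degree < (φ ^ n).degree := degree_modByMonic_lt _ hφn
  have hkey : F /ₘ φ ^ n = Q + φ := by
    have h2 : R + φ ^ n * Q = F - φ ^ (n + 1) := modByMonic_add_div _ _
    have h1 : R + φ ^ n * (Q + φ) = F := by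
      have h3 : φ ^ n * φ = φ ^ (n + 1) := (pow_succ φ n).symm
      calc R + φ ^ n * (Q + φ) = (R + φ ^ n * Q) + φ ^ n * φ := by ring
        _ = (F - φ ^ (n + 1)) + φ ^ (n + 1) := by rw [h2, h3]
        _ = F := by ring
    exact (div_modByMonic_unique (Q + φ) R hφn ⟨h1, hRlt'⟩).1
  have hφφ : φ %ₘ φ = 0 := by simpa using mul_self_modByMonic (p := (1 : A[X])) hφ
  have ha : (F /ₘ φ ^ n) %ₘ φ = Q := by
    rw [hkey, add_modByMonic, (modByMonic_eq_self_iff hφ).2 hQm, hφφ, add_zero]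
  rw [ha]
  set c : A := Ring.inverse ((n + 1 : ℕ) : A) with hc
  set e : A[X] := C c * Q with he
  have hedeg : e.degree ≤ Q.degree :=
    calc (C c * Q).degree ≤ (C c).degree + Q.degree := degree_mul_le _ _
      _ ≤ 0 + Q.degree := add_le_add_left degree_C_le _
      _ = Q.degree := zero_add _
  have heφ : e.degree < φ.degree := lt_of_le_of_lt hedeg hQm
  have hmonic : (φ + e).Monic := hφ.add_of_left heφ
  have hdegψ : (φ + e).natDegree = m := by
    rw [natDegree_eq_of_degree_eq (degree_add_eq_left_of_degree_lt heφ), hφd]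
  refine ⟨hmonic, hdegψ, ?_⟩
  -- binomial expansion
  have hNe : e * ((n + 1 : ℕ) : A[X]) = Q := by
    calc C c * Q * ((n + 1 : ℕ) : A[X]) = C c * Q * C ((n + 1 : ℕ) : A) := by
          rw [C_eq_natCast]
      _ = C (c * ((n + 1 : ℕ) : A)) * Q := by rw [C_mul]; ring
      _ = Q := by rw [hc, Ring.inverse_mul_cancel _ hunit, C_1, one_mul]
  have hpow : (φ + e) ^ (n + 1) =
      (∑ k ∈ Finset.range n, φ ^ k * e ^ (n + 1 - k) * ((n + 1).choose k : A[X]))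
        + Q * φ ^ n + φ ^ (n + 1) := by
    rw [add_pow, Finset.sum_range_succ, Finset.sum_range_succ]
    have h1 : φ ^ (n + 1) * e ^ (n + 1 - (n + 1)) * ((n + 1).choose (n + 1) : A[X])
        = φ ^ (n + 1) := by simp
    have h2 : φ ^ n * e ^ (n + 1 - n) * ((n + 1).choose n : A[X]) = Q * φ ^ n := by
      rw [Nat.choose_succ_self_right, show n + 1 - n = 1 from by omega, pow_one]
      linear_combination (φ ^ n) * hNe
    rw [h1, h2]
  have hG2 : F - (φ + e) ^ (n + 1) =
      R - ∑ k ∈ Finset.range n, φ ^ k * e ^ (n + 1 - k) * ((n + 1).choose k : A[X]) := by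
    have h2 : R + φ ^ n * Q = F - φ ^ (n + 1) := modByMonic_add_div _ _
    rw [hpow]
    linear_combination -h2
  rw [hG2]
  have hQs : Q.degree ≤ (s : WithBot ℕ) := withBot_lt_succ_iff.mp hQt
  have hes : e.degree ≤ (s : WithBot ℕ) := hedeg.trans hQs
  have hRlt : R.degree < ((n * m + s : ℕ) : WithBot ℕ) := by
    refine lt_of_lt_of_le hRlt' ?_
    rw [hφnd]
    exact_mod_cast Nat.le_add_right _ _
  have hs_lt_m : s < m := by omega
  have hSlt : (∑ k ∈ Finset.range n, φ ^ k * e ^ (n + 1 - k) * ((n + 1).choose k : A[X])).degree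
      < ((n * m + s : ℕ) : WithBot ℕ) := by
    refine lt_of_le_of_lt (degree_sum_le _ _) ?_
    rw [Finset.sup_lt_iff (WithBot.bot_lt_coe _)]
    intro k hk
    have hk' : k < n := Finset.mem_range.mp hk
    have h1 : (φ ^ k).degree ≤ ((k * m : ℕ) : WithBot ℕ) := by
      refine le_trans (degree_pow_le_of_le k hφ0.le) ?_
      exact_mod_cast le_rfl
    have h2 : (e ^ (n + 1 - k)).degree ≤ (((n + 1 - k) * s : ℕ) : WithBot ℕ) := by
      refine le_trans (degree_pow_le_of_le (n + 1 - k) hes) ?_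
      exact_mod_cast le_rfl
    have h3 : (((n + 1).choose k : A[X])).degree ≤ 0 := degree_natCast_le _
    have h4 : (φ ^ k * e ^ (n + 1 - k) * ((n + 1).choose k : A[X])).degree
        ≤ ((k * m + (n + 1 - k) * s : ℕ) : WithBot ℕ) := by
      refine le_trans (degree_mul_le_of_le (degree_mul_le_of_le h1 h2) h3) ?_
      rw [add_zero]
      exact_mod_cast le_rfl
    refine lt_of_le_of_lt h4 ?_
    rw [Nat.cast_lt]
    have h5 : (n + 1 - k) * s = (n - k) * s + s := by
      rw [show n + 1 - k = (n - k) + 1 from by omega]; ring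
    have h6 : n * m = k * m + (n - k) * m := by
      conv_lhs => rw [show n = k + (n - k) from by omega]
      ring
    have h7 : (n - k) * s < (n - k) * m :=
      mul_lt_mul_of_pos_left hs_lt_m (by omega)
    linarith
  simpa using lt_of_le_of_lt (degree_sub_le _ _) (max_lt hRlt hSlt)

/-- **Iterating the Tschirnhausen transform reaches the approximate root in at most `m`
steps.** Let `A` be a nontrivial commutative ring in which `N > 0` is a unit and `F`
monic of degree `d = N * m`. For monic `φ` of degree `m` define
`τ_F φ = φ + C (N⁻¹) * ((F /ₘ φ ^ (N - 1)) %ₘ φ)`. Then for every monic `φ` of degree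
`m` there is `j ≤ m` such that `τ_F^[j] φ` is the `N`-th approximate root of `F`. -/
theorem tschirnhausen_iterate_approximate_root {A : Type*} [CommRing A] [Nontrivial A]
    (N m d : ℕ) (hN : 0 < N) (hunit : IsUnit (N : A))
    (F : A[X]) (hF : F.Monic) (hFd : F.natDegree = d) (hd : d = N * m)
    (φ : A[X]) (hφ : φ.Monic) (hφd : φ.natDegree = m) :
    ∃ j ≤ m,
      ((fun p : A[X] => p + Polynomial.C (Ring.inverse (N : A)) *
          ((F /ₘ p ^ (N - 1)) %ₘ p))^[j] φ).Monic ∧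
      ((fun p : A[X] => p + Polynomial.C (Ring.inverse (N : A)) *
          ((F /ₘ p ^ (N - 1)) %ₘ p))^[j] φ).natDegree = m ∧
      (F - ((fun p : A[X] => p + Polynomial.C (Ring.inverse (N : A)) *
          ((F /ₘ p ^ (N - 1)) %ₘ p))^[j] φ) ^ N).degree < ((d - m : ℕ) : WithBot ℕ) := by
  subst hd
  obtain ⟨n, rfl⟩ : ∃ n, N = n + 1 := ⟨N - 1, by omega⟩
  simp only [Nat.add_sub_cancel]
  have main : ∀ j, j ≤ m →
      (((fun p : A[X] => p + Polynomial.C (Ring.inverse ((n + 1 : ℕ) : A)) *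
          ((F /ₘ p ^ n) %ₘ p))^[j] φ).Monic ∧
      ((fun p : A[X] => p + Polynomial.C (Ring.inverse ((n + 1 : ℕ) : A)) *
          ((F /ₘ p ^ n) %ₘ p))^[j] φ).natDegree = m ∧
      (F - ((fun p : A[X] => p + Polynomial.C (Ring.inverse ((n + 1 : ℕ) : A)) *
          ((F /ₘ p ^ n) %ₘ p))^[j] φ) ^ (n + 1)).degree
        < ((n * m + (m - j) : ℕ) : WithBot ℕ)) := by
    intro j
    induction j with
    | zero =>
        intro _
        refine ⟨hφ, hφd, ?_⟩
        have hdegF : F.degree = (((n + 1) * m : ℕ) : WithBot ℕ) := by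
          rw [degree_eq_natDegree hF.ne_zero, hFd]
        have hdegφ : (φ ^ (n + 1)).degree = (((n + 1) * m : ℕ) : WithBot ℕ) := by
          rw [degree_eq_natDegree (hφ.pow (n + 1)).ne_zero, hφ.natDegree_pow, hφd]
        have := degree_sub_lt (hdegF.trans hdegφ.symm) hF.ne_zero
          (by rw [hF.leadingCoeff, (hφ.pow (n + 1)).leadingCoeff])
        rw [hdegF] at this
        simpa [Nat.succ_mul] using this
    | succ j ih =>
        intro hj
        obtain ⟨h1, h2, h3⟩ := ih (by omega)
        rw [Function.iterate_succ_apply']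
        have hstep := tsch_step n m (m - j) hunit F _ h1 h2 (by omega) (by omega) h3
        refine ⟨hstep.1, hstep.2.1, ?_⟩
        have : m - j - 1 = m - (j + 1) := by omega
        rw [← this]
        exact hstep.2.2
  obtain ⟨h1, h2, h3⟩ := main m le_rfl
  refine ⟨m, le_rfl, h1, h2, ?_⟩
  have : (n + 1) * m - m = n * m + (m - m) := by simp [Nat.succ_mul]
  rw [this]
  exact h3
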